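/- Let X, Y be coprime homogeneous polynomials in ℂ[x,y] of the same degree D ≥ 1, and let α, β, γ be three distinct complex numbers. Then the product (X - αY)(X - βY)(X - γY) has at least D + 2 distinct linear factors over ℂ. -/

import Mathlib

open MvPolynomial

noncomputable section ThreeFactorAux

private lemma fin2_finsupp_eq (m : Fin 2 →₀ ℕ) :
    m = Finsupp.single 0 (m 0) + Finsupp.single 1 (m 1) := by
  ext i
  fin_cases i <;> simp

private lemma fin2_degree (m : Fin 2 →₀ ℕ) : m.degree = m 0 + m 1 := by
  rw [Finsupp.degree_apply,
    Finset.sum_subset (Finset.subset_univ m.support)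
      (by intro i _ h; exact Finsupp.notMem_support_iff.mp h),
    Fin.sum_univ_two]

private lemma support_deg {D : ℕ} {H : MvPolynomial (Fin 2) ℂ} (hH : H.IsHomogeneous D)
    {m : Fin 2 →₀ ℕ} (hm : coeff m H ≠ 0) : m 0 + m 1 = D := by
  have h := hH hm
  rw [← fin2_degree]
  simpa [Finsupp.degree_eq_weight_one, Pi.one_def] using h

private lemma eq_mu {D : ℕ} {m : Fin 2 →₀ ℕ} (hm : m 0 + m 1 = D) :
    Finsupp.single 0 (m 0) + Finsupp.single 1 (D - m 0) = m := by
  have h1 : D - m 0 = m 1 := by omega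
  rw [h1]
  exact (fin2_finsupp_eq m).symm

private def phi : MvPolynomial (Fin 2) ℂ →ₐ[ℂ] Polynomial ℂ :=
  aeval ![Polynomial.X, 1]

private lemma phi_eq (H : MvPolynomial (Fin 2) ℂ) :
    phi H = ∑ m ∈ H.support, Polynomial.C (coeff m H) * Polynomial.X ^ (m 0) := by
  conv_lhs => rw [H.as_sum]
  rw [map_sum]
  refine Finset.sum_congr rfl fun m _ => ?_
  rw [phi, aeval_monomial, Finsupp.prod_fintype _ _ (fun i => pow_zero _),
    Fin.prod_univ_two]
  simp [Polynomial.algebraMap_eq]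

private lemma phi_coeff {D : ℕ} {H : MvPolynomial (Fin 2) ℂ} (hH : H.IsHomogeneous D) (i : ℕ) :
    (phi H).coeff i =
      if i ≤ D then coeff (Finsupp.single 0 i + Finsupp.single 1 (D - i)) H else 0 := by
  classical
  rw [phi_eq, Polynomial.finset_sum_coeff]
  simp_rw [Polynomial.coeff_C_mul, Polynomial.coeff_X_pow]
  by_cases hiD : i ≤ D
  · rw [if_pos hiD]
    have hcongr : ∀ m ∈ H.support,
        (coeff m H * if i = m 0 then 1 else 0)
          = if m = Finsupp.single 0 i + Finsupp.single 1 (D - i) then coeff m H else 0 := by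
      intro m hm
      have hdm := support_deg hH (mem_support_iff.mp hm)
      by_cases h : i = m 0
      · subst h
        rw [if_pos rfl, if_pos (eq_mu hdm).symm, mul_one]
      · rw [if_neg h, if_neg, mul_zero]
        intro hc
        apply h
        rw [hc]
        simp [Finsupp.single_apply]
    rw [Finset.sum_congr rfl hcongr, Finset.sum_ite_eq']
    by_cases hmem : (Finsupp.single 0 i + Finsupp.single 1 (D - i)) ∈ H.support
    · rw [if_pos hmem]
    · rw [if_neg hmem, (notMem_support_iff.mp hmem)]
  · rw [if_neg hiD]
    apply Finset.sum_eq_zero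
    intro m hm
    have hdm := support_deg hH (mem_support_iff.mp hm)
    rw [if_neg (by omega), mul_zero]

private lemma phi_coeff_top {D : ℕ} {H : MvPolynomial (Fin 2) ℂ} (hH : H.IsHomogeneous D) :
    (phi H).coeff D = coeff (Finsupp.single 0 D) H := by
  rw [phi_coeff hH D, if_pos le_rfl]
  simp

private lemma natDegree_phi_le {D : ℕ} {H : MvPolynomial (Fin 2) ℂ} (hH : H.IsHomogeneous D) :
    (phi H).natDegree ≤ D := by
  apply Polynomial.natDegree_le_iff_coeff_eq_zero.mpr
  intro i hi
  rw [phi_coeff hH i, if_neg (by omega)]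

private lemma phi_ne_zero {D : ℕ} {H : MvPolynomial (Fin 2) ℂ} (hH : H.IsHomogeneous D)
    (h0 : H ≠ 0) : phi H ≠ 0 := by
  obtain ⟨m, hm⟩ := ne_zero_iff.mp h0
  have hdm := support_deg hH hm
  intro h
  apply hm
  have hc := phi_coeff hH (m 0)
  rw [h, Polynomial.coeff_zero] at hc
  rw [if_pos (by omega), eq_mu hdm] at hc
  exact hc.symm

private lemma eval_phi (H : MvPolynomial (Fin 2) ℂ) (r : ℂ) :
    (phi H).eval r = eval ![r, 1] H := by
  have h : (Polynomial.evalRingHom r).comp (phi.toRingHom)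
      = (MvPolynomial.eval ![r, 1]) := by
    apply MvPolynomial.ringHom_ext
    · intro c
      simp [phi]
    · intro i
      fin_cases i <;> simp [phi]
  exact RingHom.congr_fun h H

private lemma X1_dvd {D : ℕ} {H : MvPolynomial (Fin 2) ℂ} (hH : H.IsHomogeneous D)
    (h : coeff (Finsupp.single 0 D) H = 0) : (X 1 : MvPolynomial (Fin 2) ℂ) ∣ H := by
  conv => rhs; rw [H.as_sum]
  apply Finset.dvd_sum
  intro m hm
  rw [X_dvd_monomial]
  right
  intro hm1
  have hdm := support_deg hH (mem_support_iff.mp hm)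
  apply mem_support_iff.mp hm
  have : m = Finsupp.single 0 D := by
    rw [fin2_finsupp_eq m, hm1]
    simp
    congr 1
    omega
  rw [this, h]

private lemma not_isUnit_homog {D : ℕ} {H : MvPolynomial (Fin 2) ℂ}
    (hH : H.IsHomogeneous D) (hD : 1 ≤ D) : ¬ IsUnit H := by
  intro h
  have h0 : constantCoeff H ≠ 0 := (h.map constantCoeff).ne_zero
  apply h0
  have hd : ((0 : Fin 2 →₀ ℕ)).degree ≠ D := by
    simp [Finsupp.degree]
    omega
  have hz := hH.coeff_eq_zero hd
  simpa [constantCoeff_eq] using hz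

private lemma phi_C (c : ℂ) : phi (C c) = Polynomial.C c := by
  simp [phi, Polynomial.algebraMap_eq]

private lemma aeval_mul_homog {S : Type*} [CommRing S] [Algebra ℂ S] {D : ℕ}
    {H : MvPolynomial (Fin 2) ℂ} (hH : H.IsHomogeneous D) (s : S) (g : Fin 2 → S) :
    aeval (fun i => s * g i) H = s ^ D * aeval g H := by
  conv_lhs => rw [H.as_sum]
  conv_rhs => rw [H.as_sum]
  rw [map_sum, map_sum, Finset.mul_sum]
  refine Finset.sum_congr rfl fun m hm => ?_
  rw [aeval_monomial, aeval_monomial,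
    Finsupp.prod_fintype _ _ (fun i => pow_zero _),
    Finsupp.prod_fintype _ _ (fun i => pow_zero _),
    Fin.prod_univ_two, Fin.prod_univ_two]
  have h1 : m 0 + m 1 = D := support_deg hH (mem_support_iff.mp hm)
  rw [mul_pow, mul_pow, ← h1, pow_add]
  ring

private lemma linear_dvd_of_root {D : ℕ} {H : MvPolynomial (Fin 2) ℂ} (hH : H.IsHomogeneous D)
    {r : ℂ} (hr : eval ![r, 1] H = 0) : (X 0 - C r * X 1) ∣ H := by
  set E := finSuccEquiv ℂ 1 with hE
  have h1 : (1 : Fin 2) = (0 : Fin 1).succ := rfl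
  have hlin : E (X 0 - C r * X 1)
      = Polynomial.X - Polynomial.C (C r * X 0) := by
    rw [map_sub, map_mul, finSuccEquiv_X_zero, h1, finSuccEquiv_X_succ]
    simp [hE, finSuccEquiv_apply]
  have haux : (aeval ![(C r * X 0 : MvPolynomial (Fin 1) ℂ), X 0]) H = 0 := by
    have hfun : ![(C r * X 0 : MvPolynomial (Fin 1) ℂ), X 0]
        = fun i => (X 0 : MvPolynomial (Fin 1) ℂ) * ![C r, 1] i := by
      funext i
      fin_cases i <;> simp [mul_comm]
    rw [hfun, aeval_mul_homog hH]
    have hpt : (aeval ![(C r : MvPolynomial (Fin 1) ℂ), 1]) H = C (eval ![r, 1] H) := by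
      have hh : ((C : ℂ →+* MvPolynomial (Fin 1) ℂ).comp (MvPolynomial.eval ![r, 1]))
          = ((aeval ![(C r : MvPolynomial (Fin 1) ℂ), 1]).toRingHom) := by
        apply MvPolynomial.ringHom_ext
        · intro c; simp
        · intro i; fin_cases i <;> simp
      exact (RingHom.congr_fun hh H).symm
    rw [hpt, hr, map_zero, mul_zero]
  have hroot : Polynomial.eval (C r * X 0 : MvPolynomial (Fin 1) ℂ) (E H) = 0 := by
    have hcomp : (Polynomial.evalRingHom (C r * X 0 : MvPolynomial (Fin 1) ℂ)).comp
        ((E : MvPolynomial (Fin 2) ℂ →+* Polynomial (MvPolynomial (Fin 1) ℂ)))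
        = ((aeval ![(C r * X 0 : MvPolynomial (Fin 1) ℂ), X 0]).toRingHom) := by
      apply MvPolynomial.ringHom_ext
      · intro c
        simp [hE, finSuccEquiv_apply]
      · intro i
        fin_cases i
        · simp [hE, finSuccEquiv_X_zero]
        · show Polynomial.eval _ (E (X 1)) = _
          rw [hE, h1, finSuccEquiv_X_succ]
          simp
    have := RingHom.congr_fun hcomp H
    simp only [RingHom.comp_apply] at this
    rw [show ((E : MvPolynomial (Fin 2) ℂ →+* Polynomial (MvPolynomial (Fin 1) ℂ)) H) = E H from rfl] at this
    rw [Polynomial.coe_evalRingHom] at this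
    rw [this]
    exact haux
  have hdvd : E (X 0 - C r * X 1) ∣ E H := by
    rw [hlin]
    exact Polynomial.dvd_iff_isRoot.mpr hroot
  obtain ⟨g, hg⟩ := hdvd
  refine ⟨E.symm g, ?_⟩
  apply E.injective
  rw [map_mul, hg]
  simp

private lemma unit_of_dvd_two {Xp Yp : MvPolynomial (Fin 2) ℂ}
    (hcop : ∀ p, p ∣ Xp → p ∣ Yp → IsUnit p)
    {α' β' : ℂ} (hne : α' ≠ β') {p : MvPolynomial (Fin 2) ℂ}
    (h1 : p ∣ Xp - C α' * Yp) (h2 : p ∣ Xp - C β' * Yp) : IsUnit p := by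
  have hsub : (Xp - C α' * Yp) - (Xp - C β' * Yp) = C (β' - α') * Yp := by
    rw [map_sub]; ring
  have hY : p ∣ Yp := by
    have h3 : p ∣ C (β' - α') * Yp := hsub ▸ dvd_sub h1 h2
    have h4 : Yp = C (β' - α')⁻¹ * (C (β' - α') * Yp) := by
      rw [← mul_assoc, ← map_mul, inv_mul_cancel₀ (sub_ne_zero.mpr (Ne.symm hne)),
        map_one, one_mul]
    rw [h4]; exact h3.mul_left _
  have hX : p ∣ Xp := by
    have h5 : Xp = (Xp - C α' * Yp) + C α' * Yp := by ring
    rw [h5]; exact dvd_add h1 (hY.mul_left _)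
  exact hcop p hX hY

private lemma main_lemma (D : ℕ) (hD : 1 ≤ D)
    (Xp Yp : MvPolynomial (Fin 2) ℂ)
    (hX : Xp.IsHomogeneous D) (hY : Yp.IsHomogeneous D)
    (hcop : ∀ p : MvPolynomial (Fin 2) ℂ, p ∣ Xp → p ∣ Yp → IsUnit p)
    (α β γ : ℂ) (hαβ : α ≠ β) (hβγ : β ≠ γ) (hαγ : α ≠ γ)
    (hyA : (X 1 : MvPolynomial (Fin 2) ℂ) ∣ (Xp - C α * Yp)) :
    ∃ S : Finset (MvPolynomial (Fin 2) ℂ),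
      D + 2 ≤ S.card ∧
      (∀ l ∈ S, l.IsHomogeneous 1 ∧
        l ∣ (Xp - C α * Yp) * (Xp - C β * Yp) * (Xp - C γ * Yp)) ∧
      (∀ l₁ ∈ S, ∀ l₂ ∈ S, l₁ ≠ l₂ → ∀ z : ℂ, l₁ ≠ z • l₂) := by
  classical
  set A := Xp - C α * Yp with hAdef
  set B := Xp - C β * Yp with hBdef
  set Cc := Xp - C γ * Yp with hCdef
  have hAhom : A.IsHomogeneous D := hX.sub (hY.C_mul α)
  have hBhom : B.IsHomogeneous D := hX.sub (hY.C_mul β)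
  have hChom : Cc.IsHomogeneous D := hX.sub (hY.C_mul γ)
  have hXYne : ∀ δ : ℂ, Xp - C δ * Yp ≠ 0 := by
    intro δ h
    have hdvd : Yp ∣ Xp := ⟨C δ, by rw [sub_eq_zero] at h; rw [h]; ring⟩
    exact not_isUnit_homog hY hD (hcop Yp hdvd dvd_rfl)
  have hA0 : A ≠ 0 := hXYne α
  have hB0 : B ≠ 0 := hXYne β
  have hC0 : Cc ≠ 0 := hXYne γ
  have hlin1 : ∀ r : ℂ, ((X 0 - C r * X 1 : MvPolynomial (Fin 2) ℂ)).IsHomogeneous 1 :=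
    fun r => (isHomogeneous_X ℂ 0).sub ((isHomogeneous_X ℂ 1).C_mul r)
  have hX1hom : (X 1 : MvPolynomial (Fin 2) ℂ).IsHomogeneous 1 := isHomogeneous_X ℂ 1
  have hcop2 : ∀ δ ε : ℂ, δ ≠ ε →
      IsCoprime (phi (Xp - C δ * Yp)) (phi (Xp - C ε * Yp)) := by
    intro δ ε hne
    rw [Polynomial.isCoprime_iff_aeval_ne_zero_of_isAlgClosed ℂ ℂ]
    intro r
    by_contra hcon
    push_neg at hcon
    obtain ⟨e1, e2⟩ := hcon
    rw [show ((Polynomial.aeval r) (phi (Xp - C δ * Yp)))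
        = (phi (Xp - C δ * Yp)).eval r from congrFun (Polynomial.coe_aeval_eq_eval r) _,
      eval_phi] at e1
    rw [show ((Polynomial.aeval r) (phi (Xp - C ε * Yp)))
        = (phi (Xp - C ε * Yp)).eval r from congrFun (Polynomial.coe_aeval_eq_eval r) _,
      eval_phi] at e2
    have d1 := linear_dvd_of_root (hX.sub (hY.C_mul δ)) e1
    have d2 := linear_dvd_of_root (hX.sub (hY.C_mul ε)) e2
    exact not_isUnit_homog (hlin1 r) le_rfl (unit_of_dvd_two hcop hne d1 d2)
  have hX1B : ¬ (X 1 : MvPolynomial (Fin 2) ℂ) ∣ B := fun h =>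
    not_isUnit_homog hX1hom le_rfl (unit_of_dvd_two hcop hαβ hyA h)
  have hcoefB : coeff (Finsupp.single 0 D) B ≠ 0 := fun h => hX1B (X1_dvd hBhom h)
  have hpA : phi A ≠ 0 := phi_ne_zero hAhom hA0
  have hpB : phi B ≠ 0 := phi_ne_zero hBhom hB0
  have hpC : phi Cc ≠ 0 := phi_ne_zero hChom hC0
  have hdegB : (phi B).natDegree = D :=
    le_antisymm (natDegree_phi_le hBhom)
      (Polynomial.le_natDegree_of_ne_zero (by rw [phi_coeff_top hBhom]; exact hcoefB))
  have hC1 : (β - γ) ≠ 0 := sub_ne_zero.mpr hβγ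
  have hC2 : (γ - α) ≠ 0 := sub_ne_zero.mpr (Ne.symm hαγ)
  have hC3 : (α - β) ≠ 0 := sub_ne_zero.mpr hαβ
  set pa := Polynomial.C (β - γ) * phi A with hpa
  set pb := Polynomial.C (γ - α) * phi B with hpb
  set pc := Polynomial.C (α - β) * phi Cc with hpc
  have hpa0 : pa ≠ 0 := mul_ne_zero (Polynomial.C_ne_zero.mpr hC1) hpA
  have hpb0 : pb ≠ 0 := mul_ne_zero (Polynomial.C_ne_zero.mpr hC2) hpB
  have hpc0 : pc ≠ 0 := mul_ne_zero (Polynomial.C_ne_zero.mpr hC3) hpC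
  have hsum : pa + pb + pc = 0 := by
    have hid : C (β - γ) * A + C (γ - α) * B + C (α - β) * Cc = 0 := by
      rw [hAdef, hBdef, hCdef, map_sub, map_sub, map_sub]
      ring
    have h2 := congrArg phi hid
    rw [map_add, map_add, map_mul, map_mul, map_mul, map_zero,
      phi_C, phi_C, phi_C] at h2
    exact h2
  have hcab : IsCoprime pa pb := by
    rw [hpa, hpb, isCoprime_mul_unit_left_left (Polynomial.isUnit_C.mpr hC1.isUnit),
      isCoprime_mul_unit_left_right (Polynomial.isUnit_C.mpr hC2.isUnit)]
    exact hcop2 α β hαβ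
  have hcbc : IsCoprime pb pc := by
    rw [hpb, hpc, isCoprime_mul_unit_left_left (Polynomial.isUnit_C.mpr hC2.isUnit),
      isCoprime_mul_unit_left_right (Polynomial.isUnit_C.mpr hC3.isUnit)]
    exact hcop2 β γ hβγ
  have hcca : IsCoprime pc pa := by
    rw [hpc, hpa, isCoprime_mul_unit_left_left (Polynomial.isUnit_C.mpr hC3.isUnit),
      isCoprime_mul_unit_left_right (Polynomial.isUnit_C.mpr hC1.isUnit)]
    exact hcop2 γ α (Ne.symm hαγ)
  rcases Polynomial.abc hpa0 hpb0 hpc0 hcab hsum with ⟨-, hmain, -⟩ | ⟨-, hder, -⟩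
  swap
  · exfalso
    rw [hpb, Polynomial.derivative_C_mul] at hder
    have hderB : Polynomial.derivative (phi B) = 0 := by
      rcases mul_eq_zero.mp hder with h | h
      · exact absurd h (Polynomial.C_ne_zero.mpr hC2)
      · exact h
    have hd0 := Polynomial.natDegree_eq_zero_of_derivative_eq_zero hderB
    omega
  have hpbdeg : pb.natDegree = D := by
    rw [hpb, Polynomial.natDegree_C_mul hC2, hdegB]
  set P := phi A * phi B * phi Cc with hPdef
  have hP0 : P ≠ 0 := mul_ne_zero (mul_ne_zero hpA hpB) hpC
  have hradeq : UniqueFactorizationMonoid.radical (pa * pb * pc)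
      = UniqueFactorizationMonoid.radical P := by
    have hu : IsUnit (Polynomial.C ((β - γ) * ((γ - α) * (α - β))) : Polynomial ℂ) :=
      Polynomial.isUnit_C.mpr (mul_ne_zero hC1 (mul_ne_zero hC2 hC3)).isUnit
    have heq : pa * pb * pc = (hu.unit : Polynomial ℂ) * P := by
      rw [IsUnit.unit_spec, hpa, hpb, hpc, hPdef, map_mul, map_mul]
      ring
    rw [heq, UniqueFactorizationMonoid.radical_mul_of_isUnit_left (Units.isUnit _)]
  rw [hradeq, hpbdeg] at hmain
  have hfact : ∀ q ∈ UniqueFactorizationMonoid.primeFactors P,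
      Prime q ∧ q ∣ P ∧ q = Polynomial.X + Polynomial.C (q.coeff 0) ∧ q.natDegree = 1 := by
    intro q hq
    have hqn : q ∈ UniqueFactorizationMonoid.normalizedFactors P := by
      unfold UniqueFactorizationMonoid.primeFactors at hq
      exact (@Multiset.mem_toFinset _ (fun a b => Classical.propDecidable _) _ _).mp hq
    have hqp := UniqueFactorizationMonoid.prime_of_normalized_factor q hqn
    have hqd := UniqueFactorizationMonoid.dvd_of_mem_normalizedFactors hqn
    have hmon : q.Monic := by
      have hnq := UniqueFactorizationMonoid.normalize_normalized_factor q hqn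
      rw [← hnq]
      exact Polynomial.monic_normalize hqp.ne_zero
    have hdeg1 : q.natDegree = 1 := Polynomial.natDegree_eq_of_degree_eq_some
      (IsAlgClosed.degree_eq_one_of_irreducible ℂ hqp.irreducible)
    exact ⟨hqp, hqd, hmon.eq_X_add_C hdeg1, hdeg1⟩
  have hcard : (UniqueFactorizationMonoid.radical P).natDegree
      = (UniqueFactorizationMonoid.primeFactors P).card := by
    have hrp : UniqueFactorizationMonoid.radical P
        = ∏ q ∈ UniqueFactorizationMonoid.primeFactors P, q := rfl
    rw [hrp, Polynomial.natDegree_prod _ _ (fun q hq => ((hfact q hq).1).ne_zero)]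
    rw [Finset.sum_congr rfl (fun q hq => (hfact q hq).2.2.2)]
    simp
  rw [hcard] at hmain
  set F : Polynomial ℂ → MvPolynomial (Fin 2) ℂ :=
    fun q => X 0 - C (-(q.coeff 0)) * X 1 with hF
  have hlq : ∀ q ∈ UniqueFactorizationMonoid.primeFactors P, F q ∣ A * B * Cc := by
    intro q hq
    obtain ⟨hqp, hqd, hqform, -⟩ := hfact q hq
    have hq' : Polynomial.X - Polynomial.C (-(q.coeff 0)) = q := by
      rw [map_neg, sub_neg_eq_add, ← hqform]
    have hcases : q ∣ phi A ∨ q ∣ phi B ∨ q ∣ phi Cc := by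
      rcases hqp.dvd_mul.mp hqd with h | h
      · rcases hqp.dvd_mul.mp h with h' | h'
        · exact Or.inl h'
        · exact Or.inr (Or.inl h')
      · exact Or.inr (Or.inr h)
    rcases hcases with h | h | h
    · rw [← hq'] at h
      have := linear_dvd_of_root hAhom (by rw [← eval_phi]; exact Polynomial.dvd_iff_isRoot.mp h)
      exact dvd_mul_of_dvd_left (dvd_mul_of_dvd_left this B) Cc
    · rw [← hq'] at h
      have := linear_dvd_of_root hBhom (by rw [← eval_phi]; exact Polynomial.dvd_iff_isRoot.mp h)
      exact dvd_mul_of_dvd_left (this.mul_left A) Cc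
    · rw [← hq'] at h
      have := linear_dvd_of_root hChom (by rw [← eval_phi]; exact Polynomial.dvd_iff_isRoot.mp h)
      exact this.mul_left (A * B)
  have hX1mem : (X 1 : MvPolynomial (Fin 2) ℂ)
      ∉ (UniqueFactorizationMonoid.primeFactors P).image F := by
    intro h
    obtain ⟨q, -, hq⟩ := Finset.mem_image.mp h
    have := congrArg (eval ![(1:ℂ), 0]) hq
    simp [hF] at this
  have hFinj : Set.InjOn F (UniqueFactorizationMonoid.primeFactors P) := by
    intro q1 h1 q2 h2 h
    have hv := congrArg (eval ![(0:ℂ), 1]) h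
    simp [hF] at hv
    rw [(hfact q1 h1).2.2.1, (hfact q2 h2).2.2.1, hv]
  refine ⟨insert (X 1) ((UniqueFactorizationMonoid.primeFactors P).image F), ?_, ?_, ?_⟩
  · rw [Finset.card_insert_of_notMem hX1mem, Finset.card_image_of_injOn hFinj]
    omega
  · intro l hl
    rcases Finset.mem_insert.mp hl with rfl | hmem
    · exact ⟨hX1hom, dvd_mul_of_dvd_left (dvd_mul_of_dvd_left hyA B) Cc⟩
    · obtain ⟨q, hq, rfl⟩ := Finset.mem_image.mp hmem
      exact ⟨hlin1 _, hlq q hq⟩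
  · intro l₁ h₁ l₂ h₂ hne z heq
    rw [smul_eq_C_mul] at heq
    rcases Finset.mem_insert.mp h₁ with rfl | hmem₁ <;>
      rcases Finset.mem_insert.mp h₂ with h₂' | hmem₂
    · exact hne h₂'.symm
    · obtain ⟨q, hq, rfl⟩ := Finset.mem_image.mp hmem₂
      have e1 : (0:ℂ) = z := by
        simpa [hF] using congrArg (eval ![(1:ℂ), 0]) heq
      have e2 : (1:ℂ) = z * (q.coeff 0) := by
        simpa [hF] using congrArg (eval ![(0:ℂ), 1]) heq
      rw [← e1, zero_mul] at e2
      exact one_ne_zero e2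
    · subst h₂'
      obtain ⟨q, hq, rfl⟩ := Finset.mem_image.mp hmem₁
      have e1 : (1:ℂ) = z * 0 := by
        simpa [hF] using congrArg (eval ![(1:ℂ), 0]) heq
      simp at e1
    · obtain ⟨q1, hq1, rfl⟩ := Finset.mem_image.mp hmem₁
      obtain ⟨q2, hq2, rfl⟩ := Finset.mem_image.mp hmem₂
      have e1 : (1:ℂ) = z := by
        simpa [hF] using congrArg (eval ![(1:ℂ), 0]) heq
      have e2 : q1.coeff 0 = z * (q2.coeff 0) := by
        simpa [hF] using congrArg (eval ![(0:ℂ), 1]) heq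
      rw [← e1, one_mul] at e2
      exact hne (by simp only [hF, e2])

theorem three_factor_abc_application (D : ℕ) (hD : 1 ≤ D)
    (X Y : MvPolynomial (Fin 2) ℂ)
    (hX : X.IsHomogeneous D) (hY : Y.IsHomogeneous D)
    (hcop : ∀ p : MvPolynomial (Fin 2) ℂ, p ∣ X → p ∣ Y → IsUnit p)
    (α β γ : ℂ) (hαβ : α ≠ β) (hβγ : β ≠ γ) (hαγ : α ≠ γ) :
    ∃ S : Finset (MvPolynomial (Fin 2) ℂ),
      D + 2 ≤ S.card ∧
      (∀ l ∈ S, l.IsHomogeneous 1 ∧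
        l ∣ (X - C α * Y) * (X - C β * Y) * (X - C γ * Y)) ∧
      (∀ l₁ ∈ S, ∀ l₂ ∈ S, l₁ ≠ l₂ → ∀ z : ℂ, l₁ ≠ z • l₂) := by
  classical
  have hAhom : (X - C α * Y).IsHomogeneous D := hX.sub (hY.C_mul α)
  by_cases hA : coeff (Finsupp.single 0 D) (X - C α * Y) = 0
  · exact main_lemma D hD X Y hX hY hcop α β γ hαβ hβγ hαγ (X1_dvd hAhom hA)
  · have hpne : phi (X - C α * Y) ≠ 0 := fun h =>
      hA (by rw [← phi_coeff_top hAhom, h, Polynomial.coeff_zero])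
    have hdeg : (phi (X - C α * Y)).natDegree = D :=
      le_antisymm (natDegree_phi_le hAhom)
        (Polynomial.le_natDegree_of_ne_zero (by rw [phi_coeff_top hAhom]; exact hA))
    have hdegpos : (phi (X - C α * Y)).degree ≠ 0 := by
      rw [Polynomial.degree_eq_natDegree hpne, hdeg]
      intro h
      have hD0 : D = 0 := by exact_mod_cast h
      omega
    obtain ⟨r, hr⟩ := IsAlgClosed.exists_root _ hdegpos
    have hroot : eval ![r, 1] (X - C α * Y) = 0 := by rw [← eval_phi]; exact hr
    have hdvd : (MvPolynomial.X 0 - C r * MvPolynomial.X 1) ∣ (X - C α * Y) :=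
      linear_dvd_of_root hAhom hroot
    set σ : MvPolynomial (Fin 2) ℂ →ₐ[ℂ] MvPolynomial (Fin 2) ℂ :=
      aeval ![C r * MvPolynomial.X 0 + MvPolynomial.X 1, MvPolynomial.X 0] with hσ
    set τ : MvPolynomial (Fin 2) ℂ →ₐ[ℂ] MvPolynomial (Fin 2) ℂ :=
      aeval ![MvPolynomial.X 1, MvPolynomial.X 0 - C r * MvPolynomial.X 1] with hτ
    have hσC : ∀ c : ℂ, σ (C c) = C c := by
      intro c; simp [hσ, algebraMap_eq]
    have hτC : ∀ c : ℂ, τ (C c) = C c := by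
      intro c; simp [hτ, algebraMap_eq]
    have hτσ : ∀ p, τ (σ p) = p := by
      have hcomp : τ.comp σ = AlgHom.id ℂ _ := by
        apply MvPolynomial.algHom_ext
        intro i
        fin_cases i
        · show τ (σ (MvPolynomial.X 0)) = MvPolynomial.X 0
          rw [hσ, hτ]
          simp
        · show τ (σ (MvPolynomial.X 1)) = MvPolynomial.X 1
          rw [hσ, hτ]
          simp
      intro p
      exact AlgHom.congr_fun hcomp p
    have hστ : ∀ p, σ (τ p) = p := by
      have hcomp : σ.comp τ = AlgHom.id ℂ _ := by
        apply MvPolynomial.algHom_ext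
        intro i
        fin_cases i
        · show σ (τ (MvPolynomial.X 0)) = MvPolynomial.X 0
          rw [hσ, hτ]
          simp
        · show σ (τ (MvPolynomial.X 1)) = MvPolynomial.X 1
          rw [hσ, hτ]
          simp
      intro p
      exact AlgHom.congr_fun hcomp p
    have himgσ : ∀ i, ((![C r * MvPolynomial.X 0 + MvPolynomial.X 1, MvPolynomial.X 0] :
        Fin 2 → MvPolynomial (Fin 2) ℂ) i).IsHomogeneous 1 := by
      intro i
      fin_cases i
      · exact ((isHomogeneous_X ℂ 0).C_mul r).add (isHomogeneous_X ℂ 1)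
      · exact isHomogeneous_X ℂ 0
    have himgτ : ∀ i, ((![MvPolynomial.X 1, MvPolynomial.X 0 - C r * MvPolynomial.X 1] :
        Fin 2 → MvPolynomial (Fin 2) ℂ) i).IsHomogeneous 1 := by
      intro i
      fin_cases i
      · exact isHomogeneous_X ℂ 1
      · exact (isHomogeneous_X ℂ 0).sub ((isHomogeneous_X ℂ 1).C_mul r)
    have hσX : (σ X).IsHomogeneous D := by
      have := hX.aeval _ himgσ
      simpa [hσ] using this
    have hσY : (σ Y).IsHomogeneous D := by
      have := hY.aeval _ himgσ
      simpa [hσ] using this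
    have hcop' : ∀ p, p ∣ σ X → p ∣ σ Y → IsUnit p := by
      intro p h1 h2
      have h1' : τ p ∣ X := by have := map_dvd τ h1; rwa [hτσ] at this
      have h2' : τ p ∣ Y := by have := map_dvd τ h2; rwa [hτσ] at this
      have := (hcop _ h1' h2').map σ
      rwa [hστ] at this
    have hyA' : MvPolynomial.X 1 ∣ (σ X - C α * σ Y) := by
      have h1 : σ X - C α * σ Y = σ (X - C α * Y) := by
        rw [map_sub, map_mul, hσC]
      rw [h1]
      have h2 := map_dvd σ hdvd
      have h3 : σ (MvPolynomial.X 0 - C r * MvPolynomial.X 1) = MvPolynomial.X 1 := by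
        rw [map_sub, map_mul, hσC, hσ]
        simp
      rwa [h3] at h2
    obtain ⟨S', hcard, hprop, hnp⟩ :=
      main_lemma D hD (σ X) (σ Y) hσX hσY hcop' α β γ hαβ hβγ hαγ hyA'
    refine ⟨S'.image τ, ?_, ?_, ?_⟩
    · rw [Finset.card_image_of_injOn (fun a _ b _ h => by
        have := congrArg σ h; rwa [hστ, hστ] at this)]
      exact hcard
    · intro l hl
      obtain ⟨l', hl', rfl⟩ := Finset.mem_image.mp hl
      obtain ⟨hh, hd⟩ := hprop l' hl'
      constructor
      · have := hh.aeval _ himgτ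
        simpa [hτ] using this
      · have h5 := map_dvd τ hd
        have h6 : τ ((σ X - C α * σ Y) * (σ X - C β * σ Y) * (σ X - C γ * σ Y))
            = (X - C α * Y) * (X - C β * Y) * (X - C γ * Y) := by
          rw [map_mul, map_mul, map_sub, map_sub, map_sub, map_mul, map_mul, map_mul,
            hτσ, hτσ, hτC, hτC, hτC]
        rwa [h6] at h5
    · intro l₁ h₁ l₂ h₂ hne z heq
      obtain ⟨l₁', hl₁', rfl⟩ := Finset.mem_image.mp h₁
      obtain ⟨l₂', hl₂', rfl⟩ := Finset.mem_image.mp h₂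
      have hne' : l₁' ≠ l₂' := fun h => hne (by rw [h])
      apply hnp l₁' hl₁' l₂' hl₂' hne' z
      have hσeq := congrArg σ heq
      rw [hστ, smul_eq_C_mul, map_mul, hσC, hστ, ← smul_eq_C_mul] at hσeq
      exact hσeq

end ThreeFactorAux
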